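/- Let h₀ = ε₀ ⊕ ê on 𝔥 = ℂ ⊕ L²(ℝ₊) with ε₀ > 0, and let v = ψ₀⟨ψ_f,·⟩ + ψ_f⟨ψ₀,·⟩ with f ∈ Dom(ê^{−1/2}), h = h₀ + v. Then h₀^{−1/2} h h₀^{−1/2} = 1 + (ε₀^{−1/2}ψ₀)⟨h₀^{−1/2}ψ_f, ·⟩ + (h₀^{−1/2}ψ_f)⟨ε₀^{−1/2}ψ₀, ·⟩ is bounded, and its spectrum equals {1, 1 + ε₀^{−1/2}‖ê^{−1/2}f‖, 1 − ε₀^{−1/2}‖ê^{−1/2}f‖}. -/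

import Mathlib

theorem eigen_mem_spectrum' {H : Type*} [NormedAddCommGroup H] [NormedSpace ℂ H]
    {T : H →L[ℂ] H} {lam : ℂ} {x : H} (hx : x ≠ 0) (h : T x = lam • x) :
    lam ∈ spectrum ℂ T := by
  rw [spectrum.mem_iff]
  intro hu
  have h0 : (algebraMap ℂ (H →L[ℂ] H) lam - T) x = 0 := by
    simp [Algebra.algebraMap_eq_smul_one, ContinuousLinearMap.sub_apply, h]
  apply hx
  have h1 : ((↑hu.unit⁻¹ : H →L[ℂ] H) * ↑hu.unit) x = x := by
    rw [hu.unit.inv_mul]; rfl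
  calc x = ((↑hu.unit⁻¹ : H →L[ℂ] H) * ↑hu.unit) x := h1.symm
  _ = (↑hu.unit⁻¹ : H →L[ℂ] H) ((algebraMap ℂ (H →L[ℂ] H) lam - T) x) := by
      rw [IsUnit.unit_spec]; rfl
  _ = 0 := by rw [h0]; simp



/-- With `h₀ = ε₀ ⊕ ê` on `𝔥 = ℂ ⊕ L²(ℝ₊)`, `ε₀ > 0`,
`v = ψ₀⟨ψ_f,·⟩ + ψ_f⟨ψ₀,·⟩` and `h = h₀ + v`, the bounded operator
`h₀^{−1/2} h h₀^{−1/2} = 1 + (ε₀^{−1/2}ψ₀)⟨h₀^{−1/2}ψ_f, ·⟩ + (h₀^{−1/2}ψ_f)⟨ε₀^{−1/2}ψ₀, ·⟩`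
has spectrum `{1, 1 + ε₀^{−1/2}‖ê^{−1/2}f‖, 1 − ε₀^{−1/2}‖ê^{−1/2}f‖}`.
Here `g = h₀^{−1/2}ψ_f (= 0 ⊕ ê^{−1/2}f)` is orthogonal to `ψ₀`, `‖ψ₀‖ = 1`, and
(as in the model, where `L²(ℝ₊)` is infinite dimensional) there is a nonzero vector
orthogonal to both. -/
theorem rank_two_perturbation_of_identity_spectrum
    {H : Type*} [NormedAddCommGroup H] [InnerProductSpace ℂ H] [CompleteSpace H]
    (ψ₀ g : H) (ε₀ : ℝ) (hε₀ : 0 < ε₀) (hψ₀ : ‖ψ₀‖ = 1)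
    (horth : (inner ℂ ψ₀ g : ℂ) = 0)
    (hz : ∃ z : H, z ≠ 0 ∧ (inner ℂ ψ₀ z : ℂ) = 0 ∧ (inner ℂ g z : ℂ) = 0) :
    spectrum ℂ
      ((1 : H →L[ℂ] H) +
        (innerSL ℂ g).smulRight (((Real.sqrt ε₀)⁻¹ : ℝ) • ψ₀) +
        (innerSL ℂ (((Real.sqrt ε₀)⁻¹ : ℝ) • ψ₀)).smulRight g) =
      {(1 : ℂ), ((1 + (Real.sqrt ε₀)⁻¹ * ‖g‖ : ℝ) : ℂ),
        ((1 - (Real.sqrt ε₀)⁻¹ * ‖g‖ : ℝ) : ℂ)} := by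
  obtain ⟨z, hz0, hzψ, hzg⟩ := hz
  haveI : Nontrivial H := ⟨⟨z, 0, hz0⟩⟩
  haveI : Nontrivial (H →L[ℂ] H) :=
    ⟨⟨1, 0, fun h => hz0 (by simpa using congrArg (fun T : H →L[ℂ] H => T z) h)⟩⟩
  set c : ℝ := (Real.sqrt ε₀)⁻¹ with hc
  set A : H →L[ℂ] H :=
    (innerSL ℂ g).smulRight ((c : ℝ) • ψ₀) + (innerSL ℂ ((c : ℝ) • ψ₀)).smulRight g with hAdef
  clear_value c
  set r : ℝ := c * ‖g‖ with hr
  have hψψ : (inner ℂ ψ₀ ψ₀ : ℂ) = 1 := by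
    rw [inner_self_eq_norm_sq_to_K, hψ₀]; norm_num
  have hgψ : (inner ℂ g ψ₀ : ℂ) = 0 := by
    rw [← inner_conj_symm, horth, map_zero]
  have hgg : (inner ℂ g g : ℂ) = ((‖g‖ : ℂ) ^ 2) := by
    rw [inner_self_eq_norm_sq_to_K]; norm_num
  have hA : ∀ x, A x = ((c : ℂ) * inner ℂ g x) • ψ₀ + ((c : ℂ) * inner ℂ ψ₀ x) • g := by
    intro x
    rw [hAdef]
    simp only [ContinuousLinearMap.add_apply, ContinuousLinearMap.smulRight_apply,
      innerSL_apply_apply, ← Complex.coe_smul, inner_smul_left,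
      Complex.conj_ofReal, smul_smul]
    module
  -- action on the two basis vectors
  have hAψ : A ψ₀ = (c : ℂ) • g := by
    rw [hA]; rw [hgψ, hψψ]; simp
  have hAg : A g = ((c : ℂ) * (‖g‖ : ℂ) ^ 2) • ψ₀ := by
    rw [hA]; rw [hgg, horth]; simp
  -- A³ = r² A
  have hA3 : ∀ x, A (A (A x)) = ((r : ℂ) ^ 2) • A x := by
    intro x
    rw [hA x]
    simp only [map_add, map_smul, hAψ, hAg, smul_smul, smul_add]
    push_cast [hr]
    module
  -- the polynomial identity
  have haeval : Polynomial.aeval A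
      (Polynomial.X ^ 3 - Polynomial.C ((r : ℂ) ^ 2) * Polynomial.X) = 0 := by
    ext x
    simp only [map_sub, map_mul, Polynomial.aeval_X_pow, Polynomial.aeval_C, Polynomial.aeval_X,
      ContinuousLinearMap.sub_apply, ContinuousLinearMap.mul_apply, pow_succ, pow_zero, one_mul,
      ContinuousLinearMap.zero_apply, Algebra.algebraMap_eq_smul_one,
      ContinuousLinearMap.smul_apply, ContinuousLinearMap.one_apply]
    rw [hA3 x]
    module
  -- spectrum of A
  have hσA : spectrum ℂ A = {(0 : ℂ), (r : ℂ), (-r : ℂ)} := by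
    apply Set.eq_of_subset_of_subset
    · intro k hk
      have hmem := spectrum.subset_polynomial_aeval A
        (Polynomial.X ^ 3 - Polynomial.C ((r : ℂ) ^ 2) * Polynomial.X) ⟨k, hk, rfl⟩
      rw [haeval, spectrum.zero_eq] at hmem
      simp only [Polynomial.eval_sub, Polynomial.eval_mul, Polynomial.eval_pow,
        Polynomial.eval_C, Polynomial.eval_X, Set.mem_singleton_iff] at hmem
      have hfac : k * (k - (r : ℂ)) * (k + (r : ℂ)) = 0 := by linear_combination hmem
      simp only [Set.mem_insert_iff, Set.mem_singleton_iff]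
      rcases mul_eq_zero.mp hfac with h' | h'
      · rcases mul_eq_zero.mp h' with h'' | h''
        · exact Or.inl h''
        · exact Or.inr (Or.inl (sub_eq_zero.mp h''))
      · exact Or.inr (Or.inr (by rw [eq_neg_iff_add_eq_zero]; exact h'))
    · intro k hk
      have h0 : (0 : ℂ) ∈ spectrum ℂ A := by
        apply eigen_mem_spectrum' hz0
        rw [hA, hzψ, hzg]; simp
      rcases eq_or_ne g 0 with hg | hg
      · have hr0 : r = 0 := by rw [hr, hg, norm_zero, mul_zero]
        simp only [Set.mem_insert_iff, Set.mem_singleton_iff, hr0] at hk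
        rcases hk with rfl | rfl | rfl <;> simpa using h0
      · have hgn : (0:ℝ) < ‖g‖ := norm_pos_iff.mpr hg
        have hvp : ((‖g‖ : ℂ)) • ψ₀ + g ≠ 0 := by
          intro h
          have : (inner ℂ ψ₀ (((‖g‖ : ℂ)) • ψ₀ + g) : ℂ) = 0 := by rw [h, inner_zero_right]
          rw [inner_add_right, inner_smul_right, hψψ, horth] at this
          simp at this
          exact hg this
        have hvm : ((‖g‖ : ℂ)) • ψ₀ - g ≠ 0 := by
          intro h
          have : (inner ℂ ψ₀ (((‖g‖ : ℂ)) • ψ₀ - g) : ℂ) = 0 := by rw [h, inner_zero_right]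
          rw [inner_sub_right, inner_smul_right, hψψ, horth] at this
          simp at this
          exact hg this
        have hep : A (((‖g‖ : ℂ)) • ψ₀ + g) = (r : ℂ) • (((‖g‖ : ℂ)) • ψ₀ + g) := by
          rw [map_add, map_smul, hAψ, hAg]
          push_cast [hr]
          module
        have hem : A (((‖g‖ : ℂ)) • ψ₀ - g) = (-(r : ℂ)) • (((‖g‖ : ℂ)) • ψ₀ - g) := by
          rw [map_sub, map_smul, hAψ, hAg]
          push_cast [hr]
          module
        rcases hk with rfl | rfl | hk
        · exact h0
        · exact eigen_mem_spectrum' hvp hep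
        · simp only [Set.mem_singleton_iff] at hk
          subst hk
          exact eigen_mem_spectrum' hvm hem
  -- shift by identity
  have hT : (1 : H →L[ℂ] H) +
        (innerSL ℂ g).smulRight ((c : ℝ) • ψ₀) + (innerSL ℂ ((c : ℝ) • ψ₀)).smulRight g
      = algebraMap ℂ (H →L[ℂ] H) 1 + A := by
    rw [hAdef, map_one, add_assoc]
  rw [hT, ← spectrum.singleton_add_eq, hσA]
  ext k
  simp only [Set.mem_add, Set.mem_singleton_iff, Set.mem_insert_iff]
  constructor
  · rintro ⟨a, rfl, b, hb, rfl⟩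
    rcases hb with rfl | rfl | rfl
    · exact Or.inl (by ring)
    · exact Or.inr (Or.inl (by push_cast [hr]; ring))
    · exact Or.inr (Or.inr (by push_cast [hr]; ring))
  · rintro (rfl | rfl | rfl)
    · exact ⟨1, rfl, 0, Or.inl rfl, by ring⟩
    · exact ⟨1, rfl, (r : ℂ), Or.inr (Or.inl rfl), by push_cast [hr]; ring⟩
    · exact ⟨1, rfl, (-r : ℂ), Or.inr (Or.inr rfl), by push_cast [hr]; ring⟩
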